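/- For every real number m ≥ √2 + 1 there exists a right triangle whose ratio of circumradius to inradius equals m. -/

import Mathlib

theorem stmt_8 (m : ℝ) (hm : m ≥ Real.sqrt 2 + 1) :
    ∃ a b : ℝ, 0 < a ∧ 0 < b ∧
      (Real.sqrt (a^2 + b^2) / 2) / ((a + b - Real.sqrt (a^2 + b^2)) / 2) = m := by
  have h2 : (1:ℝ) < Real.sqrt 2 := by
    have : (1:ℝ) = Real.sqrt 1 := (Real.sqrt_one).symm
    rw [this]
    exact Real.sqrt_lt_sqrt (by norm_num) (by norm_num)
  have hm0 : 0 < m := lt_of_lt_of_le (by linarith) hm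
  obtain ⟨s, hs⟩ : ∃ s : ℝ, s = 1 + 1/m := ⟨_, rfl⟩
  have hs1 : 1 < s := by
    have : 0 < 1/m := by positivity
    rw [hs]; linarith
  have hsle : s ≤ Real.sqrt 2 := by
    -- 1/m ≤ √2 − 1  ⟺  m ≥ 1/(√2−1) = √2+1
    have h1 : 0 < Real.sqrt 2 - 1 := by linarith
    have key : 1/m ≤ Real.sqrt 2 - 1 := by
      rw [div_le_iff₀ hm0]
      have hsq : Real.sqrt 2 * Real.sqrt 2 = 2 := Real.mul_self_sqrt (by norm_num)
      nlinarith [hm]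
    rw [hs]; linarith
  have hs0 : 0 < s := by linarith
  have h2s : 0 ≤ 2 - s^2 := by
    have : s^2 ≤ 2 := by
      have := Real.sq_sqrt (by norm_num : (2:ℝ) ≥ 0)
      nlinarith
    linarith
  obtain ⟨d, hd⟩ : ∃ d : ℝ, d = Real.sqrt (2 - s^2) := ⟨_, rfl⟩
  have hd0 : 0 ≤ d := hd ▸ Real.sqrt_nonneg _
  have hdsq : d^2 = 2 - s^2 := by rw [hd]; exact Real.sq_sqrt h2s
  have hds : d < s := by
    nlinarith [hdsq, hs1, hd0]
  refine ⟨(s + d)/2, (s - d)/2, by linarith, by linarith, ?_⟩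
  have hab : ((s + d)/2)^2 + ((s - d)/2)^2 = 1 := by
    have : ((s + d)/2)^2 + ((s - d)/2)^2 = (s^2 + d^2)/2 := by ring
    rw [this, hdsq]; ring
  rw [hab, Real.sqrt_one]
  have hsum : (s + d)/2 + (s - d)/2 = s := by ring
  rw [hsum]
  have hsm : s - 1 = 1/m := by rw [hs]; ring
  field_simp [hsm]
  rw [hsm, one_div_one_div]
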